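/- Let p, q ∈ (0,1) with p ≠ q, let ρ ∈ (0,1), set p₁ = p₂ = p, and let y = y(p,q) = ln((1−q)/(1−p)) / ln(p/q). Then the 2×2 real matrix A'(y) = [[p−y(1−p), q−y(1−q)], [q−y(1−q), p−y(1−p)]] · diag(ρ, 1−ρ) has two distinct nonzero real eigenvalues if and only if p + q ≠ 1. -/

import Mathlib

/-- `y(p,q) = ln((1−q)/(1−p)) / ln(p/q)`. -/
noncomputable def yval (p q : ℝ) : ℝ :=
  Real.log ((1 - q) / (1 - p)) / Real.log (p / q)

/-- The matrix `A'(y)` from the censored SBM with two communities: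
the signed-encoding matrix multiplied by `diag(ρ, 1−ρ)`. -/
noncomputable def Aprime (p₁ p₂ q ρ y : ℝ) : Matrix (Fin 2) (Fin 2) ℝ :=
  !![p₁ - y * (1 - p₁), q - y * (1 - q); q - y * (1 - q), p₂ - y * (1 - p₂)] *
    Matrix.diagonal ![ρ, 1 - ρ]

/-- `m ↦ m (log(m+δ) − log(m−δ))` is strictly decreasing on `(δ, ∞)`. -/
lemma Fmono {δ : ℝ} (hδ : 0 < δ) :
    StrictAntiOn (fun m => m * (Real.log (m + δ) - Real.log (m - δ))) (Set.Ioi δ) := by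
  apply strictAntiOn_of_deriv_neg (convex_Ioi δ)
  · apply ContinuousOn.mul continuousOn_id
    apply ContinuousOn.sub
    · exact Real.continuousOn_log.comp (by fun_prop) (fun x hx => by
        simp at hx ⊢; nlinarith [hx])
    · exact Real.continuousOn_log.comp (by fun_prop) (fun x hx => by
        simp at hx ⊢; nlinarith [hx])
  · intro m hm
    rw [interior_Ioi] at hm
    simp only [Set.mem_Ioi] at hm
    have h1 : (0:ℝ) < m - δ := by linarith
    have h2 : (0:ℝ) < m + δ := by linarith
    have d1 : HasDerivAt (fun x : ℝ => Real.log (x + δ)) (1 / (m + δ)) m := by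
      simpa using (((hasDerivAt_id m).add_const δ).log (by positivity))
    have d2 : HasDerivAt (fun x : ℝ => Real.log (x - δ)) (1 / (m - δ)) m := by
      simpa using (((hasDerivAt_id m).sub_const δ).log (by positivity))
    have d : HasDerivAt (fun x : ℝ => x * (Real.log (x + δ) - Real.log (x - δ)))
        (1 * (Real.log (m + δ) - Real.log (m - δ)) + m * (1 / (m + δ) - 1 / (m - δ))) m :=
      (hasDerivAt_id m).mul (d1.sub d2)
    rw [d.deriv]
    set L := Real.log (m + δ) - Real.log (m - δ) with hL
    have hLpos : 0 < L := by
      have := Real.log_lt_log h1 (by linarith : m - δ < m + δ)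
      linarith
    have hsinh := Real.self_lt_sinh_iff.2 hLpos
    have he : Real.exp L = (m + δ) / (m - δ) := by
      rw [hL, ← Real.log_div (by positivity) (by positivity), Real.exp_log (by positivity)]
    have hsinhval : Real.sinh L = ((m + δ) / (m - δ) - (m - δ) / (m + δ)) / 2 := by
      rw [Real.sinh_eq, he, Real.exp_neg, he]
      rw [inv_div]
    rw [hsinhval] at hsinh
    have hlt : L < 2 * δ * m / ((m + δ) * (m - δ)) := by
      have : ((m + δ) / (m - δ) - (m - δ) / (m + δ)) / 2 = 2 * δ * m / ((m + δ) * (m - δ)) := by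
        field_simp; ring
      linarith [this ▸ hsinh]
    have hne : (m + δ) * (m - δ) ≠ 0 := by positivity
    have : m * (1 / (m + δ) - 1 / (m - δ)) = -(2 * δ * m / ((m + δ) * (m - δ))) := by
      field_simp; ring
    linarith [this]

/-- Positivity of the Bernoulli Kullback–Leibler divergence. -/
lemma kl_pos {p q : ℝ} (hp : p ∈ Set.Ioo (0:ℝ) 1) (hq : q ∈ Set.Ioo (0:ℝ) 1) (hpq : p ≠ q) :
    0 < p * (Real.log p - Real.log q) + (1 - p) * (Real.log (1 - p) - Real.log (1 - q)) := by
  obtain ⟨hp0, hp1⟩ := hp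
  obtain ⟨hq0, hq1⟩ := hq
  have hp1' : (0:ℝ) < 1 - p := by linarith
  have hq1' : (0:ℝ) < 1 - q := by linarith
  have h1 : Real.log (q / p) < q / p - 1 :=
    Real.log_lt_sub_one_of_pos (by positivity) (by
      intro h; rw [div_eq_one_iff_eq (ne_of_gt hp0)] at h; exact hpq h.symm)
  have h2 : Real.log ((1 - q) / (1 - p)) < (1 - q) / (1 - p) - 1 :=
    Real.log_lt_sub_one_of_pos (by positivity) (by
      intro h; rw [div_eq_one_iff_eq (ne_of_gt hp1')] at h; apply hpq; linarith)
  rw [Real.log_div (ne_of_gt hq0) (ne_of_gt hp0)] at h1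
  rw [Real.log_div (ne_of_gt hq1') (ne_of_gt hp1')] at h2
  have h1' : p * (Real.log q - Real.log p) < q - p := by
    have := mul_lt_mul_of_pos_left h1 hp0
    calc p * (Real.log q - Real.log p) < p * (q / p - 1) := this
      _ = q - p := by field_simp
  have h2' : (1 - p) * (Real.log (1 - q) - Real.log (1 - p)) < p - q := by
    have := mul_lt_mul_of_pos_left h2 hp1'
    calc (1 - p) * (Real.log (1 - q) - Real.log (1 - p)) < (1 - p) * ((1 - q) / (1 - p) - 1) := this
      _ = p - q := by field_simp; ring
  nlinarith

lemma hkey {p q : ℝ} (hq0 : 0 < q) (hqp : q < p) (hp1 : p < 1) :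
    ((p + q) * (Real.log p - Real.log q)
      - (2 - p - q) * (Real.log (1 - q) - Real.log (1 - p)) = 0) ↔ p + q = 1 := by
  set δ := (p - q) / 2 with hδdef
  have hδ : 0 < δ := by simp [hδdef]; linarith
  set m1 := (p + q) / 2 with hm1
  set m2 := (2 - p - q) / 2 with hm2
  have e1 : m1 + δ = p := by rw [hm1, hδdef]; ring
  have e2 : m1 - δ = q := by rw [hm1, hδdef]; ring
  have e3 : m2 + δ = 1 - q := by rw [hm2, hδdef]; ring
  have e4 : m2 - δ = 1 - p := by rw [hm2, hδdef]; ring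
  have hm1' : m1 ∈ Set.Ioi δ := by simp [Set.mem_Ioi]; linarith
  have hm2' : m2 ∈ Set.Ioi δ := by simp [Set.mem_Ioi]; linarith
  have key : (p + q) * (Real.log p - Real.log q)
      - (2 - p - q) * (Real.log (1 - q) - Real.log (1 - p))
      = 2 * (m1 * (Real.log (m1 + δ) - Real.log (m1 - δ))
          - m2 * (Real.log (m2 + δ) - Real.log (m2 - δ))) := by
    rw [e1, e2, e3, e4, hm1, hm2]; ring
  rw [key]
  constructor
  · intro h
    have heq : m1 * (Real.log (m1 + δ) - Real.log (m1 - δ))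
        = m2 * (Real.log (m2 + δ) - Real.log (m2 - δ)) := by linarith
    have := (Fmono hδ).injOn hm1' hm2' heq
    rw [hm1, hm2] at this; linarith
  · intro h
    have : m1 = m2 := by rw [hm1, hm2]; linarith
    rw [this]; ring

lemma diag2 (ρ : ℝ) : Matrix.diagonal ![ρ, 1 - ρ] = !![ρ, 0; 0, 1 - ρ] := by
  ext i j; fin_cases i <;> fin_cases j <;> simp [Matrix.diagonal]

lemma Aeq (p q ρ y : ℝ) : Aprime p p q ρ y =
    !![(p - y*(1-p)) * ρ, (q - y*(1-q)) * (1-ρ); (q - y*(1-q)) * ρ, (p - y*(1-p)) * (1-ρ)] := by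
  rw [Aprime, diag2, Matrix.mul_fin_two]; norm_num

theorem stmt11 (p q ρ : ℝ)
    (hp : p ∈ Set.Ioo (0 : ℝ) 1) (hq : q ∈ Set.Ioo (0 : ℝ) 1) (hpq : p ≠ q)
    (hρ : ρ ∈ Set.Ioo (0 : ℝ) 1) :
    ((Aprime p p q ρ (yval p q)).det ≠ 0 ∧
      (Aprime p p q ρ (yval p q)).trace ^ 2 ≠ 4 * (Aprime p p q ρ (yval p q)).det) ↔
    p + q ≠ 1 := by
  obtain ⟨hp0, hp1⟩ := hp
  obtain ⟨hq0, hq1⟩ := hq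
  obtain ⟨hρ0, hρ1⟩ := hρ
  have hρ1' : (0:ℝ) < 1 - ρ := by linarith
  have hp1' : (0:ℝ) < 1 - p := by linarith
  have hq1' : (0:ℝ) < 1 - q := by linarith
  set L1 := Real.log (1 - q) - Real.log (1 - p) with hL1
  set L2 := Real.log p - Real.log q with hL2
  set y := yval p q with hy
  have hyval : y = L1 / L2 := by
    rw [hy, yval, Real.log_div (ne_of_gt hq1') (ne_of_gt hp1'),
      Real.log_div (ne_of_gt hp0) (ne_of_gt hq0)]
  set a := p - y * (1 - p) with ha
  set b := q - y * (1 - q) with hb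
  -- L2 ≠ 0
  have hL2ne : L2 ≠ 0 := by
    rcases hpq.lt_or_gt with h | h
    · have := Real.log_lt_log hp0 h; rw [hL2]; intro h'; linarith
    · have := Real.log_lt_log hq0 h; rw [hL2]; intro h'; linarith
  -- a ≠ 0 : a * L2 = KL(p‖q) > 0
  have haL2 : a * L2 = p * (Real.log p - Real.log q)
      + (1 - p) * (Real.log (1 - p) - Real.log (1 - q)) := by
    rw [ha, hyval]; field_simp; ring
  have hane : a * L2 > 0 := by
    rw [haL2]; exact kl_pos ⟨hp0, hp1⟩ ⟨hq0, hq1⟩ hpq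
  -- b ≠ 0 : b * L2 = -KL(q‖p) < 0
  have hbL2 : b * L2 = -(q * (Real.log q - Real.log p)
      + (1 - q) * (Real.log (1 - q) - Real.log (1 - p))) := by
    rw [hb, hyval]; field_simp; ring
  have hbne : b * L2 < 0 := by
    rw [hbL2, neg_lt, neg_zero]; exact kl_pos ⟨hq0, hq1⟩ ⟨hp0, hp1⟩ (Ne.symm hpq)
  have hb0 : b ≠ 0 := by
    intro h; rw [h, zero_mul] at hbne; exact lt_irrefl 0 hbne
  -- a ≠ b
  have hab : a ≠ b := by
    intro h; rw [h] at hane; linarith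
  -- a + b = 0 ↔ p + q = 1
  have habL2 : (a + b) * L2 = (p + q) * L2 - (2 - p - q) * L1 := by
    rw [ha, hb, hyval]; field_simp; ring
  have hsum : a + b = 0 ↔ p + q = 1 := by
    have h0 : a + b = 0 ↔ (a + b) * L2 = 0 := by
      constructor
      · intro h; rw [h, zero_mul]
      · intro h; exact (mul_eq_zero.1 h).resolve_right hL2ne
    rw [h0, habL2]
    rcases hpq.lt_or_gt with h | h
    · -- p < q : use hkey for (q, p)
      have := hkey hp0 h hq1
      constructor
      · intro h'; rw [add_comm p q]
        apply this.1
        rw [hL1, hL2] at h'; linarith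
      · intro h'
        have : (q + p) * (Real.log q - Real.log p)
            - (2 - q - p) * (Real.log (1 - p) - Real.log (1 - q)) = 0 :=
          this.2 (by linarith)
        rw [hL1, hL2]; linarith
    · have := hkey hq0 h hp1
      rw [hL1, hL2]; exact this
  -- matrix quantities
  have hdet : (Aprime p p q ρ y).det = ρ * (1 - ρ) * (a * a - b * b) := by
    rw [Aeq, Matrix.det_fin_two_of, ha, hb]; ring
  have htr : (Aprime p p q ρ y).trace = a := by
    rw [Aeq, Matrix.trace_fin_two_of, ha]; ring
  rw [hdet, htr]
  -- trace condition always holds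
  have htrc : a ^ 2 ≠ 4 * (ρ * (1 - ρ) * (a * a - b * b)) := by
    intro heq
    have hbb : 0 < b * b := mul_self_pos.2 hb0
    nlinarith [sq_nonneg ((1 - 2 * ρ) * a), mul_pos (mul_pos hρ0 hρ1') hbb]
  constructor
  · rintro ⟨h1, _⟩ hsum1
    apply h1
    have hab0 : a + b = 0 := hsum.2 hsum1
    have hanb : a = -b := by linarith
    have : a * a - b * b = 0 := by rw [hanb]; ring
    rw [this, mul_zero]
  · intro hne
    refine ⟨?_, htrc⟩
    have habne : a + b ≠ 0 := fun h => hne (hsum.1 h)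
    have hnz : a * a - b * b ≠ 0 := by
      intro h
      have : (a - b) * (a + b) = 0 := by linear_combination h
      rcases mul_eq_zero.1 this with h' | h'
      · exact hab (by linarith)
      · exact habne h'
    exact mul_ne_zero (mul_ne_zero (ne_of_gt hρ0) (ne_of_gt hρ1')) hnz
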